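/- arXiv:2503.16267 — 2 statements merged into one kernel-verified Lean document; each statement's English description precedes it below -/
import Mathlib

section
/- Let G be an abelian group containing a subgroup H isomorphic to ℤ/2^r (with r ≥ 1) such that the quotient G/H is isomorphic to (ℤ/2)^k for some k ≥ 1. Then G is isomorphic either to ℤ/2^{r+1} ⊕ (ℤ/2)^{k-1} or to ℤ/2^r ⊕ (ℤ/2)^k. -/
open AddSubgroup

lemma core_lemma (G : Type*) [AddCommGroup G] (g₀ : G) (m t : ℕ)
    (hm : addOrderOf g₀ = 2 ^ m)
    (h2 : ∀ g : G, ∃ n : ℤ, (2 : ℤ) • g = n • ((2 : ℤ) • g₀))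
    (hcard : Nat.card G = 2 ^ (m + t)) :
    Nonempty (G ≃+ ZMod (2 ^ m) × (Fin t → ZMod 2)) := by
  haveI : Finite G := Nat.finite_of_card_ne_zero (by rw [hcard]; positivity)
  set C : AddSubgroup G := zmultiples g₀ with hC
  have hnz : ∀ g : G, (2 : ℕ) • g = (2 : ℤ) • g := fun g => by
    rw [two_nsmul, two_zsmul]
  -- quotient is a ZMod 2 module
  have hmemC : ∀ g : G, (2 : ℕ) • g ∈ C := by
    intro g
    obtain ⟨n, hn⟩ := h2 g
    rw [hnz, hn, smul_smul]
    exact zsmul_mem (mem_zmultiples g₀) _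
  letI : Module (ZMod 2) (G ⧸ C) := QuotientAddGroup.zmodModule hmemC
  -- torsion subgroup Ω
  set Ω : AddSubgroup G := {
    carrier := {g | (2 : ℕ) • g = 0}
    zero_mem' := by simp
    add_mem' := by
      intro a b ha hb
      simp only [Set.mem_setOf_eq] at *
      rw [smul_add, ha, hb, add_zero]
    neg_mem' := by
      intro a ha
      simp only [Set.mem_setOf_eq, two_nsmul] at *
      rw [← neg_add, ha, neg_zero] } with hΩ
  letI : Module (ZMod 2) Ω := AddCommGroup.zmodModule (n := 2)
    (fun x => Subtype.ext (by simp only [AddSubgroup.coe_nsmul, AddSubgroup.coe_zero]; exact x.2))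
  set π : G →+ G ⧸ C := QuotientAddGroup.mk' C with hπ
  set π' : Ω →ₗ[ZMod 2] G ⧸ C := (π.comp Ω.subtype).toZModLinearMap 2 with hπ'
  have hsurj : Function.Surjective π' := by
    intro q
    obtain ⟨g, rfl⟩ := QuotientAddGroup.mk'_surjective C q
    obtain ⟨n, hn⟩ := h2 g
    refine ⟨⟨g - n • g₀, ?_⟩, ?_⟩
    · show (2 : ℕ) • (g - n • g₀) = 0
      have key : (2 : ℕ) • (g - n • g₀) = (2 : ℤ) • g - n • ((2 : ℤ) • g₀) := by
        rw [two_nsmul, two_zsmul, two_zsmul, smul_add]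
        abel
      rw [key, hn, sub_self]
    · show π (g - n • g₀) = π g
      rw [map_sub, sub_eq_self]
      exact (QuotientAddGroup.eq_zero_iff _).mpr (zsmul_mem (mem_zmultiples g₀) _)
  obtain ⟨σ, hσ⟩ := π'.exists_rightInverse_of_surjective (LinearMap.range_eq_top.mpr hsurj)
  have hσ' : ∀ q, π' (σ q) = q := fun q => congrArg (· q) (congrArg DFunLike.coe hσ)
  -- the cyclic part
  have hzero : (zmultiplesHom G g₀) ((2 ^ m : ℕ) : ℤ) = 0 := by
    simp only [zmultiplesHom_apply, natCast_zsmul]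
    rw [← hm]
    exact addOrderOf_nsmul_eq_zero g₀
  set c : ZMod (2 ^ m) →+ G := ZMod.lift (2 ^ m) ⟨zmultiplesHom G g₀, hzero⟩ with hc
  set φ : ZMod (2 ^ m) × (G ⧸ C) →+ G := c.coprod (Ω.subtype.comp σ.toAddMonoidHom) with hφ
  have hφsurj : Function.Surjective φ := by
    intro g
    have hker : g - (σ (π g) : G) ∈ C := by
      have h0 : π (g - (σ (π g) : G)) = 0 := by
        rw [map_sub, sub_eq_zero]
        exact (hσ' (π g)).symm
      exact (QuotientAddGroup.eq_zero_iff _).mp h0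
    obtain ⟨n, hn⟩ := mem_zmultiples_iff.mp hker
    refine ⟨((n : ZMod (2 ^ m)), π g), ?_⟩
    have hcn : c (n : ZMod (2 ^ m)) = n • g₀ := by
      rw [hc, ZMod.lift_coe]
      rfl
    show c (n : ZMod (2 ^ m)) + (σ (π g) : G) = g
    rw [hcn, hn]
    abel
  -- cardinalities
  have hcardC : Nat.card C = 2 ^ m := by rw [hC, Nat.card_zmultiples, hm]
  have hcardQ : Nat.card (G ⧸ C) = 2 ^ t := by
    have h1 := AddSubgroup.card_eq_card_quotient_mul_card_addSubgroup C
    rw [hcard, hcardC, pow_add, mul_comm (2 ^ m)] at h1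
    exact Nat.eq_of_mul_eq_mul_right (pow_pos two_pos m) h1.symm
  haveI : NeZero (2 ^ m) := ⟨by positivity⟩
  have hcardD : Nat.card (ZMod (2 ^ m) × (G ⧸ C)) = Nat.card G := by
    rw [Nat.card_prod, Nat.card_zmod, hcardQ, hcard, pow_add]
  haveI : Finite (G ⧸ C) := Quotient.finite _
  haveI : Finite (ZMod (2 ^ m) × (G ⧸ C)) := by infer_instance
  have hbij : Function.Bijective φ :=
    (Nat.bijective_iff_surjective_and_card φ).mpr ⟨hφsurj, hcardD⟩
  -- identify the quotient with (ZMod 2)^t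
  set d := Module.finrank (ZMod 2) (G ⧸ C) with hd
  let b := Module.finBasis (ZMod 2) (G ⧸ C)
  let eQ : (G ⧸ C) ≃ₗ[ZMod 2] (Fin d → ZMod 2) := b.equivFun
  have htd : t = d := by
    have h1 : Nat.card (G ⧸ C) = 2 ^ d := by
      rw [Nat.card_congr eQ.toEquiv]
      simp [Nat.card_eq_fintype_card]
    rw [hcardQ] at h1
    exact Nat.pow_right_injective (le_refl 2) h1
  subst htd
  exact ⟨(AddEquiv.ofBijective φ hbij).symm.trans
    (AddEquiv.prodCongr (AddEquiv.refl _) eQ.toAddEquiv)⟩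

/-- If an abelian group `G` has a subgroup `H ≅ ℤ/2^r` (r ≥ 1) with quotient
`G/H ≅ (ℤ/2)^k` (k ≥ 1), then `G ≅ ℤ/2^(r+1) ⊕ (ℤ/2)^(k-1)` or `G ≅ ℤ/2^r ⊕ (ℤ/2)^k`. -/
theorem stmt_6 (G : Type*) [AddCommGroup G] (H : AddSubgroup G) (r k : ℕ)
    (hr : 1 ≤ r) (hk : 1 ≤ k)
    (hH : Nonempty (H ≃+ ZMod (2 ^ r)))
    (hQ : Nonempty ((G ⧸ H) ≃+ (Fin k → ZMod 2))) :
    Nonempty (G ≃+ ZMod (2 ^ (r + 1)) × (Fin (k - 1) → ZMod 2)) ∨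
    Nonempty (G ≃+ ZMod (2 ^ r) × (Fin k → ZMod 2)) := by
  obtain ⟨e⟩ := hH
  obtain ⟨f⟩ := hQ
  set h : G := ((e.symm 1 : H) : G) with hh
  -- the order of h
  have horder : addOrderOf h = 2 ^ r := by
    rw [hh, AddSubgroup.addOrderOf_coe]
    exact (addOrderOf_injective e.symm.toAddMonoidHom e.symm.injective 1).trans
      (ZMod.addOrderOf_one (2 ^ r))
  -- every element of H is a multiple of h
  have hmem : ∀ x ∈ H, ∃ n : ℤ, x = n • h := by
    intro x hx
    obtain ⟨n, hn⟩ := ZMod.intCast_surjective (n := 2 ^ r) (e ⟨x, hx⟩)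
    refine ⟨n, ?_⟩
    have : (⟨x, hx⟩ : H) = n • e.symm 1 := by
      rw [← map_zsmul, zsmul_eq_mul, mul_one, hn, AddEquiv.symm_apply_apply]
    rw [hh, ← AddSubgroup.coe_zsmul, ← this]
  -- doubles land in H
  have h2H : ∀ g : G, ∃ n : ℤ, (2 : ℤ) • g = n • h := by
    intro g
    have hmemH : (2 : ℤ) • g ∈ H := by
      have h0 : ((((2 : ℤ) • g : G) : G ⧸ H)) = 0 := by
        have : (((2 : ℤ) • g : G) : G ⧸ H) = (2 : ℤ) • ((g : G ⧸ H)) := by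
          rw [QuotientAddGroup.mk_zsmul]
        rw [this]
        apply f.injective
        rw [map_zsmul, map_zero, two_zsmul]
        funext i
        exact (by decide : ∀ a : ZMod 2, a + a = 0) _
      exact (QuotientAddGroup.eq_zero_iff _).mp h0
    exact hmem _ hmemH
  -- the cardinality of G
  have hcardG : Nat.card G = 2 ^ (r + k) := by
    rw [AddSubgroup.card_eq_card_quotient_mul_card_addSubgroup H,
      Nat.card_congr f.toEquiv, Nat.card_congr e.toEquiv]
    haveI : NeZero (2 ^ r) := ⟨by positivity⟩
    rw [Nat.card_zmod]
    simp [Nat.card_eq_fintype_card, pow_add, mul_comm]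
  by_cases hP : ∃ g : G, (2 : ℤ) • g = h
  · -- there is an element of order 2^(r+1)
    left
    obtain ⟨g₀, hg₀⟩ := hP
    have ho : addOrderOf g₀ = 2 ^ (r + 1) := by
      have hdvd : addOrderOf g₀ ∣ 2 ^ (r + 1) := by
        apply addOrderOf_dvd_of_nsmul_eq_zero
        have e1 : (2 ^ (r + 1) : ℕ) • g₀ = ((2 ^ r : ℕ) : ℤ) • ((2 : ℤ) • g₀) := by
          have hsc : ((2 ^ (r + 1) : ℕ) : ℤ) = ((2 ^ r : ℕ) : ℤ) * 2 := by
            push_cast [pow_succ]; ring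
          rw [smul_smul, ← natCast_zsmul g₀ (2 ^ (r + 1)), hsc]
        rw [e1, hg₀, natCast_zsmul, ← horder]
        exact addOrderOf_nsmul_eq_zero h
      have hndvd : ¬ addOrderOf g₀ ∣ 2 ^ r := by
        intro hd
        have hz : (2 ^ r : ℕ) • g₀ = 0 := by
          rw [← addOrderOf_dvd_iff_nsmul_eq_zero] at *
          exact hd
        have hsmall : (2 ^ (r - 1) : ℕ) • h = 0 := by
          have e1 : (2 ^ r : ℕ) • g₀ = ((2 ^ (r - 1) : ℕ) : ℤ) • ((2 : ℤ) • g₀) := by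
            have hsc : ((2 ^ r : ℕ) : ℤ) = ((2 ^ (r - 1) : ℕ) : ℤ) * 2 := by
              push_cast
              rw [← pow_succ]
              congr 1
              omega
            rw [smul_smul, ← natCast_zsmul g₀ (2 ^ r), hsc]
          rw [e1, hg₀, natCast_zsmul] at hz
          exact hz
        rw [← addOrderOf_dvd_iff_nsmul_eq_zero, horder] at hsmall
        have this := hsmall
        have := Nat.le_of_dvd (by positivity) this
        have h2 : (2 : ℕ) ^ (r - 1) < 2 ^ r := Nat.pow_lt_pow_right (by norm_num) (by omega)
        omega
      obtain ⟨j, hj, hje⟩ := (Nat.dvd_prime_pow Nat.prime_two).mp hdvd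
      rcases Nat.lt_or_ge j (r + 1) with hlt | hge
      · exfalso
        exact hndvd (hje ▸ pow_dvd_pow 2 (by omega))
      · rw [hje]
        congr 1
        omega
    refine core_lemma G g₀ (r + 1) (k - 1) ho ?_ ?_
    · intro g
      obtain ⟨n, hn⟩ := h2H g
      exact ⟨n, by rw [hg₀, hn]⟩
    · rw [hcardG]
      congr 1
      omega
  · -- no element of order 2^(r+1)
    right
    refine core_lemma G h r k horder ?_ hcardG
    intro g
    obtain ⟨n, hn⟩ := h2H g
    rcases Int.even_or_odd n with ⟨c, hc⟩ | ⟨c, hc⟩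
    · refine ⟨c, ?_⟩
      rw [hn, hc, two_zsmul, smul_add, add_smul]
    · exfalso
      apply hP
      refine ⟨g - c • h, ?_⟩
      have : (2 : ℤ) • (g - c • h) = (2 : ℤ) • g - (2 * c) • h := by
        rw [smul_sub, smul_smul]
      rw [this, hn, hc, ← sub_smul]
      norm_num
end

section
/- Let G be an abelian group fitting into a short exact sequence 0 → ℤ/4 → G → (ℤ/2)^k → 0 (k ≥ 1), let a ∈ G denote the image of 2 ∈ ℤ/4, and let G' = G/⟨a⟩. Then G ≅ ℤ/8 ⊕ (ℤ/2)^{k-1} if and only if G' ≅ ℤ/4 ⊕ (ℤ/2)^{k-1}, and G ≅ ℤ/4 ⊕ (ℤ/2)^k if and only if G' ≅ ℤ/2 ⊕ (ℤ/2)^k. -/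
open AddSubgroup Function

section Helpers

/-- Splitting lemma: if `G` has a subgroup isomorphic to `ZMod n` (via `f'`) which is
the kernel of `π : G →+ Q`, and every element of `Q` lifts to a `2`-torsion element,
then `G ≃+ ZMod n × Q`. -/
lemma splitLemma (G : Type*) [AddCommGroup G] (Q : Type*) [AddCommGroup Q]
    [Module (ZMod 2) Q] (n : ℕ) [NeZero n] (f' : ZMod n →+ G) (hf' : Injective f')
    (π : G →+ Q) (hsurj : ∀ q : Q, ∃ t : G, t + t = 0 ∧ π t = q)
    (hker : ∀ z : G, π z = 0 ↔ z ∈ f'.range) :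
    Nonempty (G ≃+ ZMod n × Q) := by
  haveI : Fact (Nat.Prime 2) := ⟨by norm_num⟩
  set T : AddSubgroup G :=
    { carrier := {z | z + z = 0}
      zero_mem' := by simp
      add_mem' := by intro p q hp hq; simp only [Set.mem_setOf_eq] at *
                     rw [show p + q + (p + q) = (p + p) + (q + q) by abel, hp, hq, add_zero]
      neg_mem' := by intro p hp; simp only [Set.mem_setOf_eq] at *
                     rw [← neg_add]; simp [hp] } with hT
  have hT2 : ∀ t : T, 2 • t = 0 := by
    rintro ⟨t, ht⟩
    ext
    simpa [two_nsmul] using (show t + t = 0 from ht)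
  letI : Module (ZMod 2) T := AddCommGroup.zmodModule hT2
  let π₂ : T →ₗ[ZMod 2] Q := (π.comp T.subtype).toZModLinearMap 2
  have hπ₂ : LinearMap.range π₂ = ⊤ := by
    rw [LinearMap.range_eq_top]
    intro q
    obtain ⟨t, ht, htq⟩ := hsurj q
    exact ⟨⟨t, ht⟩, htq⟩
  obtain ⟨σ, hσ⟩ := π₂.exists_rightInverse_of_surjective hπ₂
  have hσ' : ∀ q : Q, π ((σ q : T) : G) = q := fun q =>
    congrArg (fun l => l q) (congrArg DFunLike.coe hσ)
  let ψ : ZMod n × Q →+ G :=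
    { toFun := fun p => f' p.1 + ((σ p.2 : T) : G)
      map_zero' := by simp
      map_add' := by
        intro p q
        simp only [Prod.fst_add, Prod.snd_add, map_add, AddSubgroup.coe_add]
        abel }
  have hψ : Bijective ψ := by
    constructor
    · intro p q hpq
      have h1 : π (ψ p) = π (ψ q) := by rw [hpq]
      have h2 : ∀ r : ZMod n × Q, π (ψ r) = r.2 := by
        intro r
        have : π (f' r.1) = 0 := (hker _).mpr ⟨r.1, rfl⟩
        simp [ψ, map_add, this, hσ']
      rw [h2, h2] at h1
      have h3 : (σ p.2 : G) = (σ q.2 : G) := by rw [h1]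
      have h4 : f' p.1 = f' q.1 := by
        have := hpq
        simp only [ψ, AddMonoidHom.coe_mk, ZeroHom.coe_mk] at this
        rw [h3] at this
        exact add_right_cancel this
      exact Prod.ext (hf' h4) h1
    · intro z
      obtain ⟨m, hm⟩ := (hker (z - (σ (π z) : T))).mp (by simp [map_sub, hσ'])
      refine ⟨(m, π z), ?_⟩
      simp only [ψ, AddMonoidHom.coe_mk, ZeroHom.coe_mk, hm]
      abel
  exact ⟨(AddEquiv.ofBijective ψ hψ).symm⟩

/-- A finite elementary abelian 2-group is `(ZMod 2)^d` for some `d` with card `2^d`. -/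
lemma elemEquiv (W : Type*) [AddCommGroup W] [Finite W] (h2 : ∀ w : W, w + w = 0) :
    ∃ d : ℕ, Nat.card W = 2 ^ d ∧ Nonempty (W ≃+ (Fin d → ZMod 2)) := by
  haveI : Fact (Nat.Prime 2) := ⟨by norm_num⟩
  letI : Module (ZMod 2) W := AddCommGroup.zmodModule (by simpa [two_nsmul] using h2)
  haveI : Module.Finite (ZMod 2) W := Module.Finite.of_finite
  let b := Module.finBasis (ZMod 2) W
  let e := b.equivFun
  refine ⟨Module.finrank (ZMod 2) W, ?_, ⟨e.toAddEquiv⟩⟩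
  rw [Nat.card_congr e.toEquiv]
  simp [Nat.card_pi]

/-- Quotient computation helper: if `e a` is `((e a).1, 0)` and `p : A →+ B` is surjective
with kernel `{0, (e a).1}`, then `G ⧸ ⟨a⟩ ≃+ B × E`. -/
lemma quotEquiv (G : Type*) [AddCommGroup G] (A B E : Type*) [AddCommGroup A]
    [AddCommGroup B] [AddCommGroup E] (p : A →+ B) (hp : Surjective p)
    (e : G ≃+ A × E) (a : G)
    (hker' : ∀ c : A, p c = 0 ↔ (c = 0 ∨ c = (e a).1)) (ha2 : (e a).2 = 0) :
    Nonempty ((G ⧸ AddSubgroup.zmultiples a) ≃+ B × E) := by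
  let φ : G →+ B × E :=
    { toFun := fun z => (p (e z).1, (e z).2)
      map_zero' := by simp
      map_add' := by intro y z; simp [Prod.ext_iff] }
  have hφ : Surjective φ := by
    intro be
    obtain ⟨c, hc⟩ := hp be.1
    exact ⟨e.symm (c, be.2), by simp [φ, hc]⟩
  have hkerφ : φ.ker = AddSubgroup.zmultiples a := by
    ext z
    simp only [AddMonoidHom.mem_ker, φ, AddMonoidHom.coe_mk, ZeroHom.coe_mk, Prod.mk_eq_zero]
    constructor
    · rintro ⟨h1, h2⟩
      rcases (hker' _).mp h1 with h | h
      · have hez : e z = 0 := Prod.ext h h2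
        have : z = 0 := by simpa using congrArg e.symm hez
        rw [this]; exact zero_mem _
      · have hez : e z = e a := Prod.ext h (h2.trans ha2.symm)
        rw [e.injective hez]
        exact AddSubgroup.mem_zmultiples a
    · rintro ⟨m, rfl⟩
      have h0 : p (e a).1 = 0 := (hker' _).mpr (Or.inr rfl)
      have hm : e (m • a) = m • e a := map_zsmul e.toAddMonoidHom m a
      rw [hm]
      constructor
      · rw [Prod.smul_fst, map_zsmul p, h0, smul_zero]
      · rw [Prod.smul_snd, ha2, smul_zero]
  exact ⟨(QuotientAddGroup.quotientAddEquivOfEq hkerφ.symm).trans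
    (QuotientAddGroup.quotientKerEquivOfSurjective φ hφ)⟩

end Helpers

section Dichotomy

variable {G : Type*} [AddCommGroup G] {k : ℕ}

/-- The dichotomy: a group `G` in an extension `0 → ℤ/4 → G → (ℤ/2)^k → 0` is either
`ℤ/8 ⊕ (ℤ/2)^(k-1)` or `ℤ/4 ⊕ (ℤ/2)^k`. -/
lemma dichotomy (hk : 1 ≤ k)
    (f : ZMod 4 →+ G) (g : G →+ (Fin k → ZMod 2))
    (hf : Function.Injective f) (hg : Function.Surjective g)
    (hexact : f.range = g.ker) :
    Nonempty (G ≃+ ZMod 8 × (Fin (k - 1) → ZMod 2)) ∨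
      Nonempty (G ≃+ ZMod 4 × (Fin k → ZMod 2)) := by
  set x : G := f 1 with hx
  have hfn : ∀ n : ZMod 4, f n = n.val • x := by
    intro n
    conv_lhs => rw [← ZMod.natCast_rightInverse n]
    rw [show ((n.val : ℕ) : ZMod 4) = n.val • (1 : ZMod 4) by simp, map_nsmul]
  have hE2 : ∀ u : ZMod 2, u + u = 0 := by decide
  have h2mem : ∀ z : G, ∃ n : ZMod 4, z + z = f n := by
    intro z
    have : g (z + z) = 0 := by
      rw [map_add]
      funext i
      exact hE2 _
    have hzmem : z + z ∈ g.ker := this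
    rw [← hexact] at hzmem
    obtain ⟨n, hn⟩ := hzmem
    exact ⟨n, hn.symm⟩
  have hxx : x + x = f 2 := by
    rw [hx, ← map_add]
    norm_num
  have hf2 : f 2 ≠ 0 := by
    intro h
    have : (2 : ZMod 4) = 0 := hf (by simpa using h)
    exact absurd this (by decide)
  have hf4 : f 2 + f 2 = 0 := by
    rw [← map_add]
    have : (2 + 2 : ZMod 4) = 0 := by decide
    rw [this, map_zero]
  have hgx : g x = 0 := by
    have : x ∈ g.ker := hexact ▸ ⟨1, rfl⟩
    exact this
  by_cases hc : ∃ y : G, y + y = x ∨ y + y = -x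
  · -- Case A: x is a double; G ≃ ℤ/8 × (ℤ/2)^(k-1)
    left
    obtain ⟨y₀, hy₀⟩ := hc
    obtain ⟨y, hy⟩ : ∃ y : G, y + y = x := by
      rcases hy₀ with h | h
      · exact ⟨y₀, h⟩
      · exact ⟨-y₀, by rw [← neg_add, h, neg_neg]⟩
    have h4y : (4 : ℕ) • y = f 2 := by
      have h44 : (4 : ℕ) • y = y + y + (y + y) := by abel
      rw [h44, hy, hxx]
    have h8y : (8 : ℕ) • y = 0 := by
      have h88 : (8 : ℕ) • y = (2 : ℕ) • ((4 : ℕ) • y) := by abel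
      rw [h88, h4y, two_nsmul, hf4]
    have h8yz : (zmultiplesHom G y) (8 : ℤ) = 0 := by
      simp only [zmultiplesHom_apply]
      rw [show ((8 : ℤ)) = ((8 : ℕ) : ℤ) by norm_num, natCast_zsmul, h8y]
    let f' : ZMod 8 →+ G := ZMod.lift 8 ⟨zmultiplesHom G y, h8yz⟩
    have hf'c : ∀ m : ℤ, f' ((m : ℤ) : ZMod 8) = m • y := fun m => ZMod.lift_coe _ _ m
    have hf'n : ∀ c : ZMod 8, f' c = c.val • y := by
      intro c
      have h1 : f' (((c.val : ℕ) : ℤ) : ZMod 8) = ((c.val : ℕ) : ℤ) • y := hf'c _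
      rw [natCast_zsmul] at h1
      have h2 : ((((c.val : ℕ) : ℤ)) : ZMod 8) = c := by
        push_cast
        exact ZMod.natCast_rightInverse c
      rw [h2] at h1
      exact h1
    have hordy : addOrderOf y = 8 := by
      have hdvd : addOrderOf y ∣ 8 := addOrderOf_dvd_of_nsmul_eq_zero h8y
      have hndvd : ¬ addOrderOf y ∣ 4 := by
        intro h
        have h40 : (4 : ℕ) • y = 0 := (addOrderOf_dvd_iff_nsmul_eq_zero).mp h
        rw [h4y] at h40
        exact hf2 h40
      have hle : addOrderOf y ≤ 8 := Nat.le_of_dvd (by norm_num) hdvd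
      interval_cases h : addOrderOf y <;> revert hdvd hndvd <;> decide
    have hf'inj : Injective f' := by
      rw [injective_iff_map_eq_zero]
      intro c hc
      rw [hf'n] at hc
      have : addOrderOf y ∣ c.val := addOrderOf_dvd_of_nsmul_eq_zero hc
      rw [hordy] at this
      have hlt : c.val < 8 := ZMod.val_lt c
      have hv0 : c.val = 0 := Nat.eq_zero_of_dvd_of_lt this hlt
      exact (ZMod.val_eq_zero c).mp hv0
    have hrange : f'.range = zmultiples y := by
      ext z
      constructor
      · rintro ⟨c, rfl⟩
        rw [hf'n]
        exact nsmul_mem (mem_zmultiples y) _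
      · intro hz
        obtain ⟨m, hm⟩ := mem_zmultiples_iff.mp hz
        exact ⟨(m : ZMod 8), by rw [hf'c, hm]⟩
    have hzz : ∀ z : G, ∃ c : ℕ, z + z = c • x := by
      intro z
      obtain ⟨n, hn⟩ := h2mem z
      exact ⟨n.val, by rw [hn, hfn]⟩
    have hmem2 : ∀ z : G, 2 • z ∈ zmultiples y := by
      intro z
      obtain ⟨c, hc⟩ := hzz z
      rw [two_nsmul, hc, ← hy]
      exact nsmul_mem (add_mem (mem_zmultiples y) (mem_zmultiples y)) _
    letI : Module (ZMod 2) (G ⧸ zmultiples y) := QuotientAddGroup.zmodModule hmem2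
    set π : G →+ G ⧸ zmultiples y := QuotientAddGroup.mk' (zmultiples y) with hπ
    have hπ0 : ∀ z : G, π z = 0 ↔ z ∈ zmultiples y := fun z => QuotientAddGroup.eq_zero_iff z
    have hker : ∀ z : G, π z = 0 ↔ z ∈ f'.range := by
      intro z
      rw [hrange]
      exact hπ0 z
    have hsurjW : ∀ q : G ⧸ zmultiples y, ∃ t : G, t + t = 0 ∧ π t = q := by
      intro q
      obtain ⟨z, hz⟩ := QuotientAddGroup.mk'_surjective (zmultiples y) q
      obtain ⟨c, hc⟩ := hzz z
      refine ⟨z - c • y, ?_, ?_⟩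
      · have hrw : z - c • y + (z - c • y) = z + z - (c • y + c • y) := by abel
        rw [hrw, hc, ← nsmul_add, hy, sub_self]
      · have hcy : π (c • y) = 0 := (hπ0 _).mpr (nsmul_mem (mem_zmultiples y) _)
        rw [map_sub, hcy, sub_zero, hz]
    have split := splitLemma G (G ⧸ zmultiples y) 8 f' hf'inj π hsurjW hker
    -- cardinality bookkeeping
    have eqQ : (G ⧸ g.ker) ≃+ (Fin k → ZMod 2) :=
      QuotientAddGroup.quotientKerEquivOfSurjective g hg
    haveI : Finite f.range := Finite.of_equiv _ (AddMonoidHom.ofInjective hf).toEquiv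
    haveI : Finite g.ker := hexact ▸ ‹Finite f.range›
    haveI : Finite (G ⧸ g.ker) := Finite.of_equiv _ eqQ.symm.toEquiv
    haveI : Finite G :=
      Finite.of_equiv _ (AddSubgroup.addGroupEquivQuotientProdAddSubgroup (s := g.ker)).symm
    have cardker : Nat.card g.ker = 4 := by
      rw [← hexact]
      rw [← Nat.card_congr (AddMonoidHom.ofInjective hf).toEquiv, Nat.card_zmod]
    have cardfun : Nat.card (Fin k → ZMod 2) = 2 ^ k := by
      rw [Nat.card_pi]
      simp [Nat.card_zmod]
    have cardG : Nat.card G = 2 ^ k * 4 := by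
      rw [Nat.card_congr (AddSubgroup.addGroupEquivQuotientProdAddSubgroup (s := g.ker)),
        Nat.card_prod, Nat.card_congr eqQ.toEquiv, cardfun, cardker]
    have cardW8 : Nat.card G = Nat.card (G ⧸ zmultiples y) * 8 := by
      rw [Nat.card_congr (AddSubgroup.addGroupEquivQuotientProdAddSubgroup (s := zmultiples y)),
        Nat.card_prod, Nat.card_zmultiples, hordy]
    haveI : Finite (G ⧸ zmultiples y) := Quotient.finite _
    have h2W : ∀ w : G ⧸ zmultiples y, w + w = 0 := by
      intro w
      obtain ⟨z, hz⟩ := QuotientAddGroup.mk'_surjective (zmultiples y) w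
      rw [← hz, ← map_add]
      exact (hπ0 _).mpr (by rw [← two_nsmul]; exact hmem2 z)
    obtain ⟨d, hd, ⟨eW⟩⟩ := elemEquiv (G ⧸ zmultiples y) h2W
    have hdk : d = k - 1 := by
      have h1 : 2 ^ d * 8 = 2 ^ k * 4 := by rw [← hd, ← cardW8, cardG]
      have h2 : 2 ^ (d + 3) = 2 ^ (k + 2) := by
        rw [pow_add, pow_add]
        norm_num
        exact h1
      have := Nat.pow_right_injective (le_refl 2) h2
      omega
    subst hdk
    obtain ⟨es⟩ := split
    exact ⟨es.trans (AddEquiv.prodCongr (AddEquiv.refl _) eW)⟩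
  · -- Case B: G ≃ ℤ/4 × (ℤ/2)^k
    right
    have h2z : ∀ z : G, z + z = 0 ∨ z + z = f 2 := by
      intro z
      obtain ⟨n, hn⟩ := h2mem z
      have hcases : ∀ m : ZMod 4, m = 0 ∨ m = 1 ∨ m = 2 ∨ m = 3 := by decide
      rcases hcases n with rfl | rfl | rfl | rfl
      · left; rw [hn, map_zero]
      · exact absurd ⟨z, Or.inl (by rw [hn, hx])⟩ hc
      · right; exact hn
      · refine absurd ⟨z, Or.inr ?_⟩ hc
        rw [hn, hx, show (3 : ZMod 4) = -1 by decide, map_neg]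
    have hsurj : ∀ q : Fin k → ZMod 2, ∃ t : G, t + t = 0 ∧ g t = q := by
      intro q
      obtain ⟨z, hz⟩ := hg q
      rcases h2z z with h | h
      · exact ⟨z, h, hz⟩
      · refine ⟨z - x, ?_, ?_⟩
        · rw [show z - x + (z - x) = (z + z) - (x + x) by abel, h, hxx, sub_self]
        · rw [map_sub, hgx, sub_zero, hz]
    have hker : ∀ z : G, g z = 0 ↔ z ∈ f.range := by
      intro z
      rw [hexact]
      exact Iff.rfl
    exact splitLemma G (Fin k → ZMod 2) 4 f hf g hsurj hker

end Dichotomy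

section Forward

variable {G : Type*} [AddCommGroup G] {E : Type*} [AddCommGroup E]

lemma fwd8 (hE : ∀ v : E, v + v = 0) (a x : G) (hxx : x + x = a) (ha0 : a ≠ 0)
    (ha2 : a + a = 0) (e : G ≃+ ZMod 8 × E) :
    Nonempty ((G ⧸ AddSubgroup.zmultiples a) ≃+ ZMod 4 × E) := by
  have hea : e a = ((e x).1 + (e x).1, (e x).2 + (e x).2) := by
    rw [← hxx, map_add]; rfl
  have hw : (e x).2 + (e x).2 = 0 := hE _
  have h4tor : ((e x).1 + (e x).1) + ((e x).1 + (e x).1) = 0 := by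
    have h0 : e a + e a = 0 := by rw [← map_add, ha2, map_zero]
    have := congrArg Prod.fst h0
    rw [hea] at this
    exact this
  have hne : (e x).1 + (e x).1 ≠ 0 := by
    intro h
    apply ha0
    have : e a = 0 := by rw [hea, h, hw]; rfl
    simpa using congrArg e.symm this
  have hc4 : (e x).1 + (e x).1 = 4 :=
    (show ∀ c : ZMod 8, (c + c) + (c + c) = 0 → c + c ≠ 0 → c + c = 4 by decide)
      (e x).1 h4tor hne
  have h4 : (e a).1 = 4 := by rw [hea, hc4]
  have h2 : (e a).2 = 0 := by rw [hea, hw]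
  refine quotEquiv G (ZMod 8) (ZMod 4) E
    (ZMod.castHom (by norm_num : (4:ℕ) ∣ 8) (ZMod 4)).toAddMonoidHom ?_ e a ?_ h2
  · decide
  · intro c
    rw [h4]
    revert c
    decide

lemma fwd4 (hE : ∀ v : E, v + v = 0) (a x : G) (hxx : x + x = a) (ha0 : a ≠ 0)
    (e : G ≃+ ZMod 4 × E) :
    Nonempty ((G ⧸ AddSubgroup.zmultiples a) ≃+ ZMod 2 × E) := by
  have hea : e a = ((e x).1 + (e x).1, (e x).2 + (e x).2) := by
    rw [← hxx, map_add]; rfl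
  have hw : (e x).2 + (e x).2 = 0 := hE _
  have hne : (e x).1 + (e x).1 ≠ 0 := by
    intro h
    apply ha0
    have : e a = 0 := by rw [hea, h, hw]; rfl
    simpa using congrArg e.symm this
  have hc2 : (e x).1 + (e x).1 = 2 :=
    (show ∀ c : ZMod 4, c + c ≠ 0 → c + c = 2 by decide) (e x).1 hne
  have h4 : (e a).1 = 2 := by rw [hea, hc2]
  have h2 : (e a).2 = 0 := by rw [hea, hw]
  refine quotEquiv G (ZMod 4) (ZMod 2) E
    (ZMod.castHom (by norm_num : (2:ℕ) ∣ 4) (ZMod 2)).toAddMonoidHom ?_ e a ?_ h2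
  · decide
  · intro c
    rw [h4]
    revert c
    decide

lemma notBoth {H : Type*} [AddCommGroup H] {m n : ℕ}
    (e1 : H ≃+ ZMod 4 × (Fin m → ZMod 2)) (e2 : H ≃+ ZMod 2 × (Fin n → ZMod 2)) : False := by
  set u := e1.symm ((1 : ZMod 4), 0) with hu
  have h1 : u + u ≠ 0 := by
    intro h
    have he : e1 (u + u) = ((2 : ZMod 4), 0) := by
      rw [map_add, hu, e1.apply_symm_apply]
      refine Prod.ext ?_ ?_
      · show (1 : ZMod 4) + 1 = 2; decide
      · show (0 : Fin m → ZMod 2) + 0 = 0; simp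
    rw [h, map_zero] at he
    have : (2 : ZMod 4) = 0 := (congrArg Prod.fst he).symm
    exact absurd this (by decide)
  apply h1
  have hv : ∀ v : ZMod 2 × (Fin n → ZMod 2), v + v = 0 := by
    intro v
    refine Prod.ext ?_ ?_
    · exact (show ∀ b : ZMod 2, b + b = 0 by decide) _
    · funext i
      exact (show ∀ b : ZMod 2, b + b = 0 by decide) _
  have : e2 (u + u) = 0 := by rw [map_add, hv]
  simpa using congrArg e2.symm this

end Forward

/-- Lemma 3.6: for an extension 0 → ℤ/4 → G → (ℤ/2)^k → 0 with a the image of 2 ∈ ℤ/4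
and G' = G/⟨a⟩, one has G ≅ ℤ/8 ⊕ (ℤ/2)^(k-1) iff G' ≅ ℤ/4 ⊕ (ℤ/2)^(k-1), and
G ≅ ℤ/4 ⊕ (ℤ/2)^k iff G' ≅ ℤ/2 ⊕ (ℤ/2)^k. -/
theorem stmt_7 (G : Type*) [AddCommGroup G] (k : ℕ) (hk : 1 ≤ k)
    (f : ZMod 4 →+ G) (g : G →+ (Fin k → ZMod 2))
    (hf : Function.Injective f) (hg : Function.Surjective g)
    (hexact : f.range = g.ker) :
    (Nonempty (G ≃+ ZMod 8 × (Fin (k - 1) → ZMod 2)) ↔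
      Nonempty ((G ⧸ AddSubgroup.zmultiples (f 2)) ≃+ ZMod 4 × (Fin (k - 1) → ZMod 2))) ∧
    (Nonempty (G ≃+ ZMod 4 × (Fin k → ZMod 2)) ↔
      Nonempty ((G ⧸ AddSubgroup.zmultiples (f 2)) ≃+ ZMod 2 × (Fin k → ZMod 2))) := by
  have hxx : f 1 + f 1 = f 2 := by
    rw [← map_add]; norm_num
  have hf2 : f 2 ≠ 0 := by
    intro h
    have : (2 : ZMod 4) = 0 := hf (by simpa using h)
    exact absurd this (by decide)
  have hf4 : f 2 + f 2 = 0 := by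
    rw [← map_add]
    rw [show (2 + 2 : ZMod 4) = 0 by decide, map_zero]
  have hEfun : ∀ (m : ℕ) (v : Fin m → ZMod 2), v + v = 0 := by
    intro m v
    funext i
    exact (show ∀ b : ZMod 2, b + b = 0 by decide) _
  have dich := dichotomy hk f g hf hg hexact
  constructor
  · constructor
    · rintro ⟨e⟩
      exact fwd8 (hEfun _) (f 2) (f 1) hxx hf2 hf4 e
    · rintro ⟨q4⟩
      rcases dich with h8 | h4
      · exact h8
      · obtain ⟨e4⟩ := h4
        exact absurd (fwd4 (hEfun _) (f 2) (f 1) hxx hf2 e4) (fun ⟨q2⟩ => notBoth q4 q2)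
  · constructor
    · rintro ⟨e⟩
      exact fwd4 (hEfun _) (f 2) (f 1) hxx hf2 e
    · rintro ⟨q2⟩
      rcases dich with h8 | h4
      · obtain ⟨e8⟩ := h8
        exact absurd (fwd8 (hEfun _) (f 2) (f 1) hxx hf2 hf4 e8) (fun ⟨q4⟩ => notBoth q4 q2)
      · exact h4
end
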